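/- In the WMM axiomatic model, the SB litmus test behavior is allowed: there exists an execution satisfying the WMM axioms of the program where P1 executes St a 1 then r1 = Ld b, and P2 executes St b 1 then r2 = Ld a (a ≠ b, memory initialized to 0), in which r1 = 0 and r2 = 0. -/

import Mathlib

/-- Instruction operations of the WMM axiomatic model. -/
inductive IOp
  | ld (a : ℕ)
  | st (a : ℕ) (v : ℕ)
  | commit
  | reconcile
  | nm
  deriving DecidableEq

/-- An instruction: processor id, position in program order, operation. -/
structure Instr where
  proc : ℕ
  idx : ℕ
  op : IOp
  deriving DecidableEq

/-- Per-processor program order. -/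
def po (x y : Instr) : Prop := x.proc = y.proc ∧ x.idx < y.idx

/-- The WMM order-preserving table `order(X, Y)`. -/
def ordTable : IOp → IOp → Prop
  | .ld a, .ld b => a = b
  | .ld _, .st _ _ => True
  | .ld _, .reconcile => True
  | .ld _, .commit => True
  | .st a _, .st b _ => a = b
  | .st _ _, .commit => True
  | .st _ _, .ld _ => False
  | .st _ _, .reconcile => False
  | .reconcile, .ld _ => True
  | .reconcile, .st _ _ => True
  | .reconcile, .reconcile => True
  | .reconcile, .commit => True
  | .commit, .ld _ => False
  | .commit, .st _ _ => True
  | .commit, .reconcile => True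
  | .commit, .commit => True
  | _, _ => False

def isStoreTo (a : ℕ) (x : Instr) : Prop := ∃ v, x.op = IOp.st a v
def isLoadOf (a : ℕ) (x : Instr) : Prop := x.op = IOp.ld a

/-- A WMM axiomatic execution: a set of instructions `I`, a global memory
order `mo` (strict total on `I`), a reads-from relation `rf`, satisfying the
Inst-Order and Ld-Val axioms of WMM. -/
structure WMMAx where
  I : Set Instr
  mo : Instr → Instr → Prop
  rf : Instr → Instr → Prop
  mo_irrefl : ∀ x, ¬ mo x x
  mo_trans : ∀ {x y z}, mo x y → mo y z → mo x z
  mo_total : ∀ x ∈ I, ∀ y ∈ I, x ≠ y → mo x y ∨ mo y x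
  instOrder : ∀ x ∈ I, ∀ y ∈ I, po x y → ordTable x.op y.op → mo x y
  rf_mem : ∀ {S L}, rf S L → S ∈ I ∧ L ∈ I
  ldVal : ∀ {S L a}, rf S L → L.op = IOp.ld a →
    isStoreTo a S ∧ (mo S L ∨ po S L) ∧
    ∀ S' ∈ I, isStoreTo a S' → (mo S' L ∨ po S' L) → S' = S ∨ mo S' S


/-- Rank function giving the memory order Ia < Ib < L1 < L2 < S1 < S2. -/
def sbRnk (a b : ℕ) (x : Instr) : ℕ :=
  if x = ⟨0, 0, IOp.st a 0⟩ then 0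
  else if x = ⟨0, 1, IOp.st b 0⟩ then 1
  else if x = ⟨1, 1, IOp.ld b⟩ then 2
  else if x = ⟨2, 1, IOp.ld a⟩ then 3
  else if x = ⟨1, 0, IOp.st a 1⟩ then 4
  else 5

lemma sbRnk_Ia (a b : ℕ) : sbRnk a b ⟨0, 0, IOp.st a 0⟩ = 0 := by simp [sbRnk]
lemma sbRnk_Ib (a b : ℕ) : sbRnk a b ⟨0, 1, IOp.st b 0⟩ = 1 := by simp [sbRnk]
lemma sbRnk_L1 (a b : ℕ) : sbRnk a b ⟨1, 1, IOp.ld b⟩ = 2 := by simp [sbRnk]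
lemma sbRnk_L2 (a b : ℕ) : sbRnk a b ⟨2, 1, IOp.ld a⟩ = 3 := by simp [sbRnk]
lemma sbRnk_S1 (a b : ℕ) : sbRnk a b ⟨1, 0, IOp.st a 1⟩ = 4 := by simp [sbRnk]
lemma sbRnk_S2 (a b : ℕ) : sbRnk a b ⟨2, 0, IOp.st b 1⟩ = 5 := by simp [sbRnk]

/-- The SB litmus test behavior is allowed in WMM: there exists an
execution satisfying the WMM axioms of P1: St a 1; r1 = Ld b and
P2: St b 1; r2 = Ld a (a ≠ b, memory initialized to 0) with r1 = 0 and
r2 = 0 (each load reads an initialization store of value 0). -/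
theorem wmm_SB_allowed (a b : ℕ) (hab : a ≠ b) :
    ∃ (E : WMMAx) (S1 L1 S2 L2 Ia Ib SL1 SL2 : Instr),
      S1 = ⟨1, 0, IOp.st a 1⟩ ∧ L1 = ⟨1, 1, IOp.ld b⟩ ∧
      S2 = ⟨2, 0, IOp.st b 1⟩ ∧ L2 = ⟨2, 1, IOp.ld a⟩ ∧
      Ia = ⟨0, 0, IOp.st a 0⟩ ∧ Ib = ⟨0, 1, IOp.st b 0⟩ ∧
      E.I = {S1, L1, S2, L2, Ia, Ib} ∧
      (∀ x ∈ E.I, (isStoreTo a x ∨ isLoadOf a x) → x ≠ Ia → E.mo Ia x) ∧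
      (∀ x ∈ E.I, (isStoreTo b x ∨ isLoadOf b x) → x ≠ Ib → E.mo Ib x) ∧
      E.rf SL1 L1 ∧ SL1.op = IOp.st b 0 ∧
      E.rf SL2 L2 ∧ SL2.op = IOp.st a 0 := by
  classical
  set S1 : Instr := ⟨1, 0, IOp.st a 1⟩ with hS1
  set L1 : Instr := ⟨1, 1, IOp.ld b⟩ with hL1
  set S2 : Instr := ⟨2, 0, IOp.st b 1⟩ with hS2
  set L2 : Instr := ⟨2, 1, IOp.ld a⟩ with hL2
  set Ia : Instr := ⟨0, 0, IOp.st a 0⟩ with hIa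
  set Ib : Instr := ⟨0, 1, IOp.st b 0⟩ with hIb
  have rIa := sbRnk_Ia a b
  have rIb := sbRnk_Ib a b
  have rL1 := sbRnk_L1 a b
  have rL2 := sbRnk_L2 a b
  have rS1 := sbRnk_S1 a b
  have rS2 := sbRnk_S2 a b
  refine ⟨{ I := {S1, L1, S2, L2, Ia, Ib}
            mo := fun x y => sbRnk a b x < sbRnk a b y
            rf := fun S L => (S = Ib ∧ L = L1) ∨ (S = Ia ∧ L = L2)
            mo_irrefl := fun x => lt_irrefl _
            mo_trans := fun h1 h2 => lt_trans h1 h2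
            mo_total := ?_
            instOrder := ?_
            rf_mem := ?_
            ldVal := ?_ },
          S1, L1, S2, L2, Ia, Ib, Ib, Ia,
          rfl, rfl, rfl, rfl, rfl, rfl, rfl, ?_, ?_,
          Or.inl ⟨rfl, rfl⟩, rfl, Or.inr ⟨rfl, rfl⟩, rfl⟩
  · -- mo_total
    rintro x hx y hy hxy
    simp only [Set.mem_insert_iff, Set.mem_singleton_iff] at hx hy
    rcases hx with rfl | rfl | rfl | rfl | rfl | rfl <;>
      rcases hy with rfl | rfl | rfl | rfl | rfl | rfl <;>
      simp_all <;> omega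
  · -- instOrder
    rintro x hx y hy hpo hord
    simp only [Set.mem_insert_iff, Set.mem_singleton_iff] at hx hy
    rcases hx with rfl | rfl | rfl | rfl | rfl | rfl <;>
      rcases hy with rfl | rfl | rfl | rfl | rfl | rfl <;>
      simp_all [po, ordTable] <;> omega
  · -- rf_mem
    rintro S L (⟨rfl, rfl⟩ | ⟨rfl, rfl⟩) <;> simp
  · -- ldVal
    rintro S L a0 (⟨rfl, rfl⟩ | ⟨rfl, rfl⟩) hld
    · -- reads-from Ib into L1 : Ld b, so a0 = b
      have hab0 : a0 = b := by
        have : IOp.ld b = IOp.ld a0 := hld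
        cases this; rfl
      subst hab0
      refine ⟨⟨0, rfl⟩, Or.inl (by simp [hIb, hL1, sbRnk_Ib, sbRnk_L1]), ?_⟩
      rintro S' hS' ⟨v, hv⟩ hmo
      simp only [Set.mem_insert_iff, Set.mem_singleton_iff] at hS'
      rcases hS' with rfl | rfl | rfl | rfl | rfl | rfl
      · exact absurd (by cases hv; rfl) hab  -- S1 : st a 1 = st b v → a = b
      · exact absurd hv (by simp)
      · -- S2 : need mo S2 L1 ∨ po S2 L1 to be false
        rcases hmo with hmo | hpo
        · rw [rS2, rL1] at hmo; omega
        · exact absurd hpo.1 (by simp [hS2, hL1])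
      · exact absurd hv (by simp)
      · exact absurd (by cases hv; rfl) hab
      · exact Or.inl rfl
    · -- reads-from Ia into L2 : Ld a, so a0 = a
      have hab0 : a0 = a := by
        have : IOp.ld a = IOp.ld a0 := hld
        cases this; rfl
      subst hab0
      refine ⟨⟨0, rfl⟩, Or.inl (by simp [hIa, hL2, sbRnk_Ia, sbRnk_L2]), ?_⟩
      rintro S' hS' ⟨v, hv⟩ hmo
      simp only [Set.mem_insert_iff, Set.mem_singleton_iff] at hS'
      rcases hS' with rfl | rfl | rfl | rfl | rfl | rfl
      · -- S1 : need mo S1 L2 ∨ po S1 L2 false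
        rcases hmo with hmo | hpo
        · rw [rS1, rL2] at hmo; omega
        · exact absurd hpo.1 (by simp [hS1, hL2])
      · exact absurd hv (by simp)
      · exact absurd (by cases hv; rfl) (Ne.symm hab)
      · exact absurd hv (by simp)
      · exact Or.inl rfl
      · exact absurd (by cases hv; rfl) (Ne.symm hab)
  · -- Ia minimal among a-accesses
    rintro x hx hacc hne
    simp only [Set.mem_insert_iff, Set.mem_singleton_iff] at hx
    rcases hx with rfl | rfl | rfl | rfl | rfl | rfl <;>
      simp_all [isStoreTo, isLoadOf] <;> omega
  · -- Ib minimal among b-accesses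
    rintro x hx hacc hne
    simp only [Set.mem_insert_iff, Set.mem_singleton_iff] at hx
    rcases hx with rfl | rfl | rfl | rfl | rfl | rfl <;>
      simp_all [isStoreTo, isLoadOf] <;> omega
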